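/- If Z_1, ..., Z_{n+1} are exchangeable random variables with almost surely distinct values, then for any k ∈ {1, ..., n+1}, the probability that Z_{n+1} is among the k smallest values of Z_1, ..., Z_{n+1} is exactly k/(n+1). -/
import Mathlib


open MeasureTheory

open Finset in
lemma rank_card (n k : ℕ) (hk1 : 1 ≤ k) (hk2 : k ≤ n + 1)
    (v : Fin (n + 1) → ℝ) (hv : Function.Injective v) :
    (univ.filter fun j : Fin (n + 1) =>
      (univ.filter fun i => v i ≤ v j).card ≤ k).card = k := by
  set g : Fin (n + 1) → ℕ := fun j => (univ.filter fun i => v i ≤ v j).card with hg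
  have hmono : ∀ j j', v j < v j' → g j < g j' := by
    intro j j' h
    apply Finset.card_lt_card
    rw [Finset.ssubset_iff_of_subset]
    · exact ⟨j', by simp, by simp [not_le, h]⟩
    · intro i hi
      simp only [mem_filter, mem_univ, true_and] at hi ⊢
      exact hi.trans h.le
  have hginj : Function.Injective g := by
    intro j j' h
    by_contra hne
    rcases lt_trichotomy (v j) (v j') with hlt | heq | hlt
    · exact absurd h (hmono _ _ hlt).ne
    · exact hne (hv heq)
    · exact absurd h.symm (hmono _ _ hlt).ne
  have hmem : ∀ j, g j ∈ Finset.Icc 1 (n + 1) := by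
    intro j
    simp only [Finset.mem_Icc]
    constructor
    · have : j ∈ univ.filter fun i => v i ≤ v j := by simp
      exact Finset.card_pos.2 ⟨j, this⟩
    · simpa using Finset.card_filter_le univ fun i => v i ≤ v j
  have himg : univ.image g = Finset.Icc 1 (n + 1) := by
    apply Finset.eq_of_subset_of_card_le
    · intro m hm
      rcases Finset.mem_image.1 hm with ⟨j, _, rfl⟩
      exact hmem j
    · rw [Finset.card_image_of_injective _ hginj]
      simp
  calc (univ.filter fun j => g j ≤ k).card
      = ((univ.image g).filter fun m => m ≤ k).card := by
        rw [Finset.filter_image, Finset.card_image_of_injective _ hginj]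
    _ = k := by
        rw [himg]
        have : (Finset.Icc 1 (n+1)).filter (fun m => m ≤ k) = Finset.Icc 1 k := by
          ext m; simp only [Finset.mem_filter, Finset.mem_Icc]; omega
        rw [this, Nat.card_Icc]; omega


/-- Exchangeability: the joint law is invariant under permutations of the indices. -/
def Exchangeable {Ω α ι : Type*} [MeasurableSpace Ω] [MeasurableSpace α]
    (P : Measure Ω) (Z : ι → Ω → α) : Prop :=
  ∀ σ : Equiv.Perm ι,
    Measure.map (fun ω i => Z (σ i) ω) P = Measure.map (fun ω i => Z i ω) P

/-- If Z_1, ..., Z_{n+1} are exchangeable with almost surely distinct values,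
then for any k ∈ {1, ..., n+1}, the probability that Z_{n+1} is among the k smallest values
of Z_1, ..., Z_{n+1} is exactly k/(n+1). -/
theorem stmt_2 {Ω : Type*} [MeasurableSpace Ω] (P : Measure Ω) [IsProbabilityMeasure P]
    (n : ℕ) (Z : Fin (n + 1) → Ω → ℝ) (hZ : ∀ i, Measurable (Z i))
    (hexch : Exchangeable P Z)
    (hdist : ∀ i j, i ≠ j → P {ω | Z i ω = Z j ω} = 0)
    (k : ℕ) (hk1 : 1 ≤ k) (hk2 : k ≤ n + 1) :
    (P {ω | (Finset.univ.filter fun i : Fin (n + 1) =>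
        Z i ω ≤ Z (Fin.last n) ω).card ≤ k}).toReal = k / (n + 1) := by
  open Finset in
  classical
  -- events
  set E : Fin (n + 1) → Set Ω := fun j =>
    {ω | (univ.filter fun i => Z i ω ≤ Z j ω).card ≤ k} with hE
  -- measurability of the count
  have hcount : ∀ j, Measurable fun ω => (univ.filter fun i => Z i ω ≤ Z j ω).card := by
    intro j
    have : (fun ω => (univ.filter fun i => Z i ω ≤ Z j ω).card)
        = fun ω => ∑ i : Fin (n + 1), if Z i ω ≤ Z j ω then 1 else 0 := by
      funext ω; rw [Finset.card_filter]
    rw [this]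
    exact Finset.measurable_sum _ fun i _ =>
      Measurable.ite (measurableSet_le (hZ i) (hZ j)) measurable_const measurable_const
  have hEmeas : ∀ j, MeasurableSet (E j) := by
    intro j
    exact (hcount j) (measurableSet_le measurable_id measurable_const)
  -- the target set in the product space
  set S : Set (Fin (n + 1) → ℝ) :=
    {v | (univ.filter fun i => v i ≤ v (Fin.last n)).card ≤ k} with hS
  have hScount : Measurable fun v : Fin (n+1) → ℝ =>
      (univ.filter fun i => v i ≤ v (Fin.last n)).card := by
    have : (fun v : Fin (n+1) → ℝ => (univ.filter fun i => v i ≤ v (Fin.last n)).card)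
        = fun v => ∑ i : Fin (n + 1), if v i ≤ v (Fin.last n) then 1 else 0 := by
      funext v; rw [Finset.card_filter]
    rw [this]
    exact Finset.measurable_sum _ fun i _ =>
      Measurable.ite (measurableSet_le (measurable_pi_apply i) (measurable_pi_apply _))
        measurable_const measurable_const
  have hSmeas : MeasurableSet S :=
    hScount (measurableSet_le measurable_id measurable_const)
  have hT : Measurable (fun ω i => Z i ω) := measurable_pi_lambda _ hZ
  -- all events have equal probability
  have heq : ∀ j, P (E j) = P (E (Fin.last n)) := by
    intro j
    set σ := Equiv.swap j (Fin.last n) with hσ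
    have hTσ : Measurable (fun ω i => Z (σ i) ω) :=
      measurable_pi_lambda _ fun i => hZ (σ i)
    have h1 : (fun ω i => Z (σ i) ω) ⁻¹' S = E j := by
      ext ω
      simp only [Set.mem_preimage, hS, Set.mem_setOf_eq, hE]
      have hlast : σ (Fin.last n) = j := Equiv.swap_apply_right _ _
      simp only [hlast]
      have : (univ.filter fun i => Z (σ i) ω ≤ Z j ω).card
          = (univ.filter fun i => Z i ω ≤ Z j ω).card := by
        apply Finset.card_bij (fun i _ => σ i)
        · intro i hi; simp only [Finset.mem_filter, Finset.mem_univ, true_and] at hi ⊢; exact hi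
        · intro a ha b hb hab; exact σ.injective hab
        · intro b hb; exact ⟨σ.symm b, by simpa using (Finset.mem_filter.1 hb).2, by simp⟩
      rw [this]
    have h2 : (fun ω i => Z i ω) ⁻¹' S = E (Fin.last n) := by
      rfl
    calc P (E j) = Measure.map (fun ω i => Z (σ i) ω) P S := by
          rw [Measure.map_apply hTσ hSmeas, h1]
      _ = Measure.map (fun ω i => Z i ω) P S := by rw [hexch σ]
      _ = P (E (Fin.last n)) := by rw [Measure.map_apply hT hSmeas, h2]
  -- a.e. distinctness
  have hD : ∀ᵐ ω ∂P, Function.Injective fun i => Z i ω := by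
    have : P {ω | ¬ Function.Injective fun i => Z i ω} = 0 := by
      have hsub : {ω | ¬ Function.Injective fun i => Z i ω} ⊆
          ⋃ (p : Fin (n+1) × Fin (n+1)) (_ : p.1 ≠ p.2), {ω | Z p.1 ω = Z p.2 ω} := by
        intro ω hω
        simp only [Set.mem_setOf_eq, Function.Injective, not_forall] at hω
        obtain ⟨i, j, hij, hne⟩ := hω
        exact Set.mem_iUnion.2 ⟨(i, j), Set.mem_iUnion.2 ⟨hne, hij⟩⟩
      refine measure_mono_null hsub ?_
      exact measure_iUnion_null fun p => measure_iUnion_null fun hp => hdist _ _ hp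
    exact this
  -- sum of the probabilities equals k
  have hsum : ∑ j : Fin (n+1), P (E j) = k := by
    have h1 : ∑ j : Fin (n+1), P (E j)
        = ∫⁻ ω, ∑ j : Fin (n+1), (E j).indicator (fun _ => (1 : ENNReal)) ω ∂P := by
      rw [lintegral_finset_sum]
      · congr 1; funext j
        rw [lintegral_indicator (hEmeas j) _]
        simp
      · intro j _
        exact (measurable_const.indicator (hEmeas j))
    rw [h1]
    have h2 : ∀ᵐ ω ∂P, ∑ j : Fin (n+1), (E j).indicator (fun _ => (1 : ENNReal)) ω
        = (k : ENNReal) := by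
      filter_upwards [hD] with ω hω
      have : ∑ j : Fin (n+1), (E j).indicator (fun _ => (1 : ENNReal)) ω
          = (univ.filter fun j => ω ∈ E j).card := by
        rw [Finset.card_filter]
        push_cast
        congr 1; funext j
        by_cases h : ω ∈ E j <;> simp [Set.indicator_apply, h]
      rw [this]
      have : (univ.filter fun j => ω ∈ E j)
          = univ.filter fun j : Fin (n+1) =>
              (univ.filter fun i => Z i ω ≤ Z j ω).card ≤ k := rfl
      rw [this, rank_card n k hk1 hk2 _ hω]
    rw [lintegral_congr_ae h2, lintegral_const]
    simp
  -- conclude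
  have hfin : P (E (Fin.last n)) ≠ ⊤ := measure_ne_top _ _
  have hval : (n + 1 : ENNReal) * P (E (Fin.last n)) = k := by
    rw [← hsum]
    rw [Finset.sum_congr rfl fun j _ => heq j, Finset.sum_const]
    simp [mul_comm]
  have : P (E (Fin.last n)) = (k : ENNReal) / (n + 1) := by
    rw [ENNReal.eq_div_iff (by simp) (by simp)]
    exact hval
  show (P (E (Fin.last n))).toReal = _
  rw [this, ENNReal.toReal_div]
  have h1 : ((n : ENNReal) + 1).toReal = (n : ℝ) + 1 := by
    rw [ENNReal.toReal_add (by simp) (by simp)]; simp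
  rw [h1]; simp
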